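/- Exactly five deterministic 1-bit strategies for the DMH game avoid all forbidden entries, namely those whose strategy matrices have rows (as unit vectors indexed by output) equal to: (e1,e4,e1,e4), (e2,e2,e2,e3), (e2,e2,e2,e4), (e2,e4,e2,e4), and (e3,e2,e2,e3); and each of these has expected payoff 0. -/

import Mathlib

def detStrategy (E : Fin 4 → Fin 2) (D : Fin 2 → Fin 4) : Fin 4 → Fin 4 → ℝ :=
  fun m z => if D (E m) = z then 1 else 0

def dmhForbidden : Finset (Fin 4 × Fin 4) :=
  {(0,3), (1,0), (1,2), (2,2), (2,3), (3,0), (3,1)}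

noncomputable def dmhPayoff (S : Fin 4 → Fin 4 → ℝ) : ℝ :=
  (1/4) * (-(S 0 0) + S 2 0)

/-- The strategy matrix whose m-th row is the unit vector e_{r m}. -/
def rowStrategy (r : Fin 4 → Fin 4) : Fin 4 → Fin 4 → ℝ :=
  fun m z => if z = r m then 1 else 0

lemma det_eq_row (E : Fin 4 → Fin 2) (D : Fin 2 → Fin 4) :
    detStrategy E D = rowStrategy (fun m => D (E m)) := by
  funext m z
  simp [detStrategy, rowStrategy, eq_comm]

lemma row_zero_iff (r : Fin 4 → Fin 4) (p q : Fin 4) :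
    rowStrategy r p q = 0 ↔ r p ≠ q := by
  unfold rowStrategy
  by_cases h : q = r p
  · simp [h]
  · simp [h, Ne.symm h]

lemma forb_iff (r : Fin 4 → Fin 4) :
    (∀ p ∈ dmhForbidden, r p.1 ≠ p.2) ↔
      (r 0 ≠ 3 ∧ r 1 ≠ 0 ∧ r 1 ≠ 2 ∧ r 2 ≠ 2 ∧ r 2 ≠ 3 ∧ r 3 ≠ 0 ∧ r 3 ≠ 1) := by
  simp [dmhForbidden]

lemma range2_iff (r : Fin 4 → Fin 4) :
    (∃ E : Fin 4 → Fin 2, ∃ D : Fin 2 → Fin 4, ∀ m, D (E m) = r m) ↔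
      ∃ x y : Fin 4, ∀ m, r m = x ∨ r m = y := by
  constructor
  · rintro ⟨E, D, h⟩
    refine ⟨D 0, D 1, fun m => ?_⟩
    rw [← h m]
    match hE : E m with
    | 0 => exact Or.inl rfl
    | 1 => exact Or.inr rfl
  · rintro ⟨x, y, h⟩
    refine ⟨fun m => if r m = x then 0 else 1, ![x, y], fun m => ?_⟩
    rcases h m with h' | h'
    · simp [h']
    · by_cases hx : r m = x
      · simp [hx]
      · have hyx : y ≠ x := fun hh => hx (h'.trans hh)
        simp [h', hyx]

set_option maxHeartbeats 1000000 in
set_option maxRecDepth 10000 in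
lemma keycore : ∀ r : Fin 4 → Fin 4,
    ((∃ x y : Fin 4, ∀ m, r m = x ∨ r m = y) ∧
      (r 0 ≠ 3 ∧ r 1 ≠ 0 ∧ r 1 ≠ 2 ∧ r 2 ≠ 2 ∧ r 2 ≠ 3 ∧ r 3 ≠ 0 ∧ r 3 ≠ 1)) ↔
      (r = ![0,3,0,3] ∨ r = ![1,1,1,2] ∨ r = ![1,1,1,3] ∨
        r = ![1,3,1,3] ∨ r = ![2,1,1,2]) := by decide

/-- exactly five deterministic 1-bit strategies avoid all forbidden
entries — those with rows (e1,e4,e1,e4), (e2,e2,e2,e3), (e2,e2,e2,e4),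
(e2,e4,e2,e4), (e3,e2,e2,e3) — and each of these has expected payoff 0. -/
theorem dmh_safe_deterministic_strategies :
    ({s | ∃ E D, s = detStrategy E D ∧ ∀ p ∈ dmhForbidden, s p.1 p.2 = 0} :
        Set (Fin 4 → Fin 4 → ℝ)) =
      {rowStrategy ![0,3,0,3], rowStrategy ![1,1,1,2], rowStrategy ![1,1,1,3],
        rowStrategy ![1,3,1,3], rowStrategy ![2,1,1,2]} ∧
    (∀ r ∈ ({![0,3,0,3], ![1,1,1,2], ![1,1,1,3], ![1,3,1,3], ![2,1,1,2]} :
        Set (Fin 4 → Fin 4)), dmhPayoff (rowStrategy r) = 0) := by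
  constructor
  · ext s
    simp only [Set.mem_setOf_eq, Set.mem_insert_iff, Set.mem_singleton_iff]
    constructor
    · rintro ⟨E, D, rfl, hforb⟩
      set r : Fin 4 → Fin 4 := fun m => D (E m) with hr
      have hsr : detStrategy E D = rowStrategy r := det_eq_row E D
      have hforb' : ∀ p ∈ dmhForbidden, r p.1 ≠ p.2 := by
        intro p hp
        exact (row_zero_iff r p.1 p.2).1 (hsr ▸ hforb p hp)
      have hkey := (keycore r).1
        ⟨(range2_iff r).1 ⟨E, D, fun m => rfl⟩, (forb_iff r).1 hforb'⟩
      rcases hkey with h | h | h | h | h <;> rw [hsr, h] <;> tauto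
    · intro h
      have : ∃ r : Fin 4 → Fin 4, s = rowStrategy r ∧
          (r = ![0,3,0,3] ∨ r = ![1,1,1,2] ∨ r = ![1,1,1,3] ∨
            r = ![1,3,1,3] ∨ r = ![2,1,1,2]) := by
        rcases h with h | h | h | h | h
        · exact ⟨_, h, Or.inl rfl⟩
        · exact ⟨_, h, Or.inr (Or.inl rfl)⟩
        · exact ⟨_, h, Or.inr (Or.inr (Or.inl rfl))⟩
        · exact ⟨_, h, Or.inr (Or.inr (Or.inr (Or.inl rfl)))⟩
        · exact ⟨_, h, Or.inr (Or.inr (Or.inr (Or.inr rfl)))⟩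
      obtain ⟨r, rfl, hr⟩ := this
      obtain ⟨⟨E, D, hED⟩, hforb⟩ :=
        ((keycore r).2 hr).imp (fun hx => (range2_iff r).2 hx) id
      refine ⟨E, D, ?_, ?_⟩
      · rw [det_eq_row E D]
        exact congrArg rowStrategy (funext fun m => (hED m).symm)
      · intro p hp
        exact (row_zero_iff r p.1 p.2).2 ((forb_iff r).2 hforb p hp)
  · rintro r (rfl | rfl | rfl | rfl | rfl) <;>
      norm_num [dmhPayoff, rowStrategy] <;> simp [Matrix.cons_val]
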